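/- For all a, b > 0 with a ≠ b, S(a,b) - L(a,b) ≤ (5/2)·(A(a,b) - L(a,b)), where S(a,b) = √((a²+b²)/2), A(a,b) = (a+b)/2, and L(a,b) = (b-a)/(ln b - ln a). -/

import Mathlib

open Real Set

private lemma aux_nonneg (f f' : ℝ → ℝ) (hf : ∀ x ∈ Set.Ici (1:ℝ), HasDerivAt f (f' x) x)
    (h0 : f 1 = 0) (hpos : ∀ x ∈ Set.Ici (1:ℝ), 0 ≤ f' x) :
    ∀ x ∈ Set.Ici (1:ℝ), 0 ≤ f x := by
  intro x hx
  have hmono : MonotoneOn f (Set.Ici 1) := by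
    apply monotoneOn_of_deriv_nonneg (convex_Ici 1)
    · exact fun y hy => (hf y hy).continuousAt.continuousWithinAt
    · intro y hy
      rw [interior_Ici] at hy
      exact (hf y (le_of_lt (show (1:ℝ) < y from hy) : (1:ℝ) ≤ y)).differentiableAt.differentiableWithinAt
    · intro y hy
      rw [interior_Ici] at hy
      rw [(hf y (le_of_lt (show (1:ℝ) < y from hy) : (1:ℝ) ≤ y)).deriv]
      exact hpos y (le_of_lt (show (1:ℝ) < y from hy) : (1:ℝ) ≤ y)
  have h1 := hmono (by norm_num : (1:ℝ) ∈ Set.Ici 1) hx hx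
  rw [h0] at h1
  exact h1

private lemma key (t : ℝ) (ht : 1 ≤ t) : 3*(t^2-1) ≤ (t^2+4*t+1) * Real.log t := by
  have hpos : ∀ x ∈ Set.Ici (1:ℝ), (0:ℝ) < x := fun x hx => lt_of_lt_of_le one_pos hx
  -- g2
  have h2 : ∀ x ∈ Set.Ici (1:ℝ),
      0 ≤ 2*Real.log x - 3 + 4*x⁻¹ - (x⁻¹)^2 := by
    apply aux_nonneg _ (fun x => 2*(x-1)^2/x^3)
    · intro x hx
      have hx0 := hpos x hx
      have h := ((Real.hasDerivAt_log (ne_of_gt hx0)).const_mul 2)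
      have hinv := hasDerivAt_inv (ne_of_gt hx0)
      have := ((h.sub_const 3).add (hinv.const_mul 4)).sub (hinv.pow 2)
      refine this.congr_deriv ?_
      norm_num
      field_simp
      ring
    · norm_num
    · intro x hx
      have hx0 := hpos x hx
      positivity
  -- g1
  have h1 : ∀ x ∈ Set.Ici (1:ℝ),
      0 ≤ (2*x+4) * Real.log x - 5*x + 4 + x⁻¹ := by
    apply aux_nonneg _ (fun x => 2*Real.log x - 3 + 4*x⁻¹ - (x⁻¹)^2)
    · intro x hx
      have hx0 := hpos x hx
      have hl := Real.hasDerivAt_log (ne_of_gt hx0)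
      have hinv := hasDerivAt_inv (ne_of_gt hx0)
      have hp : HasDerivAt (fun y : ℝ => 2*y+4) 2 x := by
        simpa using ((hasDerivAt_id x).const_mul 2).add_const 4
      have := (((hp.mul hl).sub ((hasDerivAt_id x).const_mul 5)).add_const 4).add hinv
      refine this.congr_deriv ?_
      field_simp
      ring
    · norm_num
    · exact h2
  -- g0
  have h0 : ∀ x ∈ Set.Ici (1:ℝ),
      0 ≤ (x^2+4*x+1) * Real.log x - 3*(x^2-1) := by
    apply aux_nonneg _ (fun x => (2*x+4) * Real.log x - 5*x + 4 + x⁻¹)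
    · intro x hx
      have hx0 := hpos x hx
      have hl := Real.hasDerivAt_log (ne_of_gt hx0)
      have hp : HasDerivAt (fun y : ℝ => y^2+4*y+1) (2*x+4) x := by
        have := (((hasDerivAt_id x).pow 2).add ((hasDerivAt_id x).const_mul 4)).add_const 1
        simpa [mul_comm] using this
      have hq : HasDerivAt (fun y : ℝ => 3*(y^2-1)) (3*(2*x)) x := by
        have := (((hasDerivAt_id x).pow 2).sub_const 1).const_mul 3
        simpa [mul_comm] using this
      have := (hp.mul hl).sub hq
      refine this.congr_deriv ?_
      field_simp
      ring
    · simp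
    · exact h1
  linarith [h0 t ht]

theorem MSL_le_MAL (a b : ℝ) (ha : 0 < a) (hb : 0 < b) (hab : a ≠ b) :
    Real.sqrt ((a ^ 2 + b ^ 2) / 2) - (b - a) / (Real.log b - Real.log a) ≤
      (5 / 2) * ((a + b) / 2 - (b - a) / (Real.log b - Real.log a)) := by
  wlog h : a < b with H
  · have hba : b < a := lt_of_le_of_ne (not_lt.1 h) (Ne.symm hab)
    have := H b a hb ha (Ne.symm hab) hba
    have e1 : (a - b) / (Real.log a - Real.log b) = (b - a) / (Real.log b - Real.log a) := by
      rw [← neg_sub b a, ← neg_sub (Real.log b) (Real.log a), neg_div_neg_eq]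
    rw [e1] at this
    calc Real.sqrt ((a ^ 2 + b ^ 2) / 2) - (b - a) / (Real.log b - Real.log a)
        = Real.sqrt ((b ^ 2 + a ^ 2) / 2) - (b - a) / (Real.log b - Real.log a) := by ring_nf
      _ ≤ (5 / 2) * ((b + a) / 2 - (b - a) / (Real.log b - Real.log a)) := this
      _ = (5 / 2) * ((a + b) / 2 - (b - a) / (Real.log b - Real.log a)) := by ring
  · -- a < b
    have hlog : Real.log a < Real.log b := Real.log_lt_log ha h
    have hlog0 : 0 < Real.log b - Real.log a := sub_pos.2 hlog
    set L := (b - a) / (Real.log b - Real.log a) with hL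
    have hL0 : 0 < L := div_pos (sub_pos.2 h) hlog0
    set G := Real.sqrt (a * b) with hG
    have hG0 : 0 < G := Real.sqrt_pos.2 (mul_pos ha hb)
    have hG2 : G ^ 2 = a * b := Real.sq_sqrt (mul_pos ha hb).le
    -- L ≤ (A + 2G)/3 i.e. 6(b-a) ≤ (a + b + 4G)(log b - log a)
    have hkey : 3 * (b - a) ≤ (a + b + 4 * G) * ((Real.log b - Real.log a) / 2) := by
      have hba1 : 1 ≤ Real.sqrt (b / a) := by
        rw [show (1:ℝ) = Real.sqrt 1 by simp]
        exact Real.sqrt_le_sqrt ((one_le_div ha).2 h.le)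
      have hk := key (Real.sqrt (b / a)) hba1
      have hsq : Real.sqrt (b / a) ^ 2 = b / a := Real.sq_sqrt (div_pos hb ha).le
      have hlg : Real.log (Real.sqrt (b / a)) = (Real.log b - Real.log a) / 2 := by
        rw [Real.log_sqrt (div_pos hb ha).le, Real.log_div (ne_of_gt hb) (ne_of_gt ha)]
      rw [hsq, hlg] at hk
      have hGa : a * Real.sqrt (b / a) = G := by
        rw [hG, show a * b = a^2 * (b/a) by field_simp, Real.sqrt_mul (by positivity),
          Real.sqrt_sq ha.le]
      -- multiply hk by a > 0
      have := mul_le_mul_of_nonneg_left hk ha.le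
      calc 3 * (b - a) = a * (3 * (b / a - 1)) := by field_simp
        _ ≤ a * ((b / a + 4 * Real.sqrt (b / a) + 1) * ((Real.log b - Real.log a) / 2)) := this
        _ = (a + b + 4 * (a * Real.sqrt (b / a))) * ((Real.log b - Real.log a) / 2) := by
            field_simp
            ring
        _ = (a + b + 4 * G) * ((Real.log b - Real.log a) / 2) := by rw [hGa]
    have hLle : L ≤ (a + b + 4 * G) / 6 := by
      rw [hL, div_le_div_iff₀ hlog0 (by norm_num : (0:ℝ) < 6)]
      nlinarith [hkey]
    have hGA : 2 * G ≤ a + b := by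
      nlinarith [sq_nonneg (Real.sqrt a - Real.sqrt b), Real.sq_sqrt ha.le, Real.sq_sqrt hb.le,
        Real.sqrt_mul_self ha.le, Real.sqrt_mul ha.le b, hG2, hG0]
    have hLA : L ≤ (a + b) / 2 := by nlinarith
    -- final: sqrt((a²+b²)/2) ≤ (5/2)A - (3/2)L
    have hrhs : 0 ≤ 5 / 2 * ((a + b) / 2) - 3 / 2 * L := by nlinarith
    have hmain : Real.sqrt ((a ^ 2 + b ^ 2) / 2) ≤ 5 / 2 * ((a + b) / 2) - 3 / 2 * L := by
      rw [show (5:ℝ) / 2 * ((a + b) / 2) - 3 / 2 * L =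
        Real.sqrt ((5 / 2 * ((a + b) / 2) - 3 / 2 * L)^2) from (Real.sqrt_sq hrhs).symm]
      apply Real.sqrt_le_sqrt
      nlinarith [sq_nonneg ((a+b)/2 - G), sq_nonneg (L - (a + b + 4*G)/6),
        mul_nonneg (sub_nonneg.2 hLle) (sub_nonneg.2 hLA), hG2, hL0.le, hG0.le,
        mul_nonneg (sub_nonneg.2 hLle) hG0.le]
    linarith
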